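/- The only solutions (n, m, k, d) in non-negative integers with m ≥ 1 to L_n = 10^d·F_m + L_k, where d = ⌊log₁₀ L_k⌋ + 1 is the number of decimal digits of L_k, are (5,1,1,1) and (5,2,1,1); i.e., L_5 = 10·F_1 + L_1 = 10·F_2 + L_1 = 11. -/

import Mathlib

def lucas : ℕ → ℕ
  | 0 => 2
  | 1 => 1
  | n + 2 => lucas (n + 1) + lucas n

namespace LucasConcat
open Nat

lemma lucas_add_two (n : ℕ) : lucas (n+2) = lucas (n+1) + lucas n := rfl

lemma lucas_pos (n : ℕ) : 0 < lucas n := by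
  induction n using Nat.strong_induction_on with
  | _ n ih =>
    match n with
    | 0 => decide
    | 1 => decide
    | n+2 => rw [lucas_add_two]; have := ih (n+1) (by omega); omega

lemma lucas_succ_le (b : ℕ) (hb : 1 ≤ b) : lucas b ≤ lucas (b+1) := by
  match b, hb with
  | 1, _ => decide
  | b+2, _ =>
    have h : lucas (b+2+1) = lucas (b+2) + lucas (b+1) := lucas_add_two (b+1)
    have := lucas_pos (b+1)
    omega

lemma lucas_mono {a b : ℕ} (ha : 1 ≤ a) (hab : a ≤ b) : lucas a ≤ lucas b := by
  induction b with
  | zero => omega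
  | succ b ih =>
    rcases Nat.lt_or_ge a (b+1) with h | h
    · exact le_trans (ih (by omega)) (lucas_succ_le b (by omega))
    · have : a = b + 1 := by omega
      subst this; rfl

lemma lucas_add_fib (k : ℕ) : lucas k + fib k = 2 * fib (k+1) := by
  induction k using Nat.strong_induction_on with
  | _ k ih =>
    match k with
    | 0 => decide
    | 1 => decide
    | k+2 =>
      have h1 := ih (k+1) (by omega)
      have h2 := ih k (by omega)
      have e1 : lucas (k+2) = lucas (k+1) + lucas k := rfl
      have e2 : fib (k+2) = fib k + fib (k+1) := fib_add_two
      have e3 : fib (k+3) = fib (k+1) + fib (k+2) := fib_add_two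
      have e4 : fib (k+1+1) = fib (k+2) := rfl
      have e5 : fib (k+2+1) = fib (k+3) := rfl
      omega

-- Cassini over ℤ
lemma cassini (n : ℕ) : (fib (n+1) : ℤ)^2 - fib (n+1) * fib n - (fib n : ℤ)^2 = (-1)^n := by
  induction n with
  | zero => simp
  | succ n ih =>
    have h : (fib (n+1+1) : ℤ) = fib n + fib (n+1) := by exact_mod_cast fib_add_two
    rw [h, pow_succ]
    linear_combination (-1 : ℤ) * ih

lemma fib_addZ (m n : ℕ) : (fib (m + n + 1) : ℤ) = fib m * fib n + fib (m+1) * fib (n+1) := by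
  exact_mod_cast fib_add m n

lemma fib_five_mul (b : ℕ) : (fib (5*b+5) : ℤ) =
    fib (b+1) * (25 * (fib (b+1):ℤ)^4 - 25 * (-1)^b * (fib (b+1):ℤ)^2 + 5) := by
  have h1 := cassini b
  have h2 : ((-1 : ℤ)^b)^2 = 1 := by
    rw [← pow_mul, mul_comm, pow_mul]; norm_num
  have e1 : (fib (2*b+1) : ℤ) = fib b * fib b + fib (b+1) * fib (b+1) := by
    have := fib_addZ b b; rw [show b + b + 1 = 2*b+1 by ring] at this; linarith
  have e2 : (fib (2*b+2) : ℤ) = fib b * fib (b+1) + fib (b+1) * fib (b+2) := by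
    have := fib_addZ b (b+1); rw [show b + (b+1) + 1 = 2*b+2 by ring] at this; linarith
  have e3 : (fib (2*b+3) : ℤ) = fib (b+1) * fib (b+1) + fib (b+2) * fib (b+2) := by
    have := fib_addZ (b+1) (b+1); rw [show (b+1) + (b+1) + 1 = 2*b+3 by ring] at this; linarith
  have e4 : (fib (3*b+2) : ℤ) = fib b * fib (2*b+1) + fib (b+1) * fib (2*b+2) := by
    have := fib_addZ b (2*b+1); rw [show b + (2*b+1) + 1 = 3*b+2 by ring] at this; linarith
  have e5 : (fib (3*b+3) : ℤ) = fib (b+1) * fib (2*b+1) + fib (b+2) * fib (2*b+2) := by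
    have := fib_addZ (b+1) (2*b+1); rw [show (b+1) + (2*b+1) + 1 = 3*b+3 by ring] at this; linarith
  have e6 : (fib (5*b+5) : ℤ) = fib (2*b+2) * fib (3*b+2) + fib (2*b+3) * fib (3*b+3) := by
    have := fib_addZ (2*b+2) (3*b+2); rw [show (2*b+2) + (3*b+2) + 1 = 5*b+5 by ring] at this; linarith
  have ew : (fib (b+2) : ℤ) = fib b + fib (b+1) := by exact_mod_cast fib_add_two
  set u : ℤ := (fib b : ℤ)
  set v : ℤ := (fib (b+1) : ℤ)
  set c : ℤ := ((-1 : ℤ))^b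
  rw [e6, e4, e5, e1, e2, e3, ew]
  linear_combination (-5*u^2*v - 5*u*v^2 - 20*v^3 + 5*v*c) * h1 + (5*v) * h2

lemma fib_five_mul_nat (b : ℕ) : ∃ U, fib (5*b+5) = 5 * fib (b+1) * U ∧ U % 5 = 1 := by
  have hv : 1 ≤ fib (b+1) := (fib_pos).mpr (by omega)
  have hv2 : (fib (b+1))^2 ≤ (fib (b+1))^4 := Nat.pow_le_pow_right hv (by omega)
  have h := fib_five_mul b
  rcases Nat.even_or_odd b with hb | hb
  · refine ⟨5*((fib (b+1))^4 - (fib (b+1))^2) + 1, ?_, by omega⟩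
    rw [hb.neg_one_pow] at h
    have goalZ : (fib (5*b+5):ℤ) =
        ((5 * fib (b+1) * (5*((fib (b+1))^4 - (fib (b+1))^2) + 1) : ℕ) : ℤ) := by
      push_cast [Nat.cast_sub hv2]
      linarith
    exact_mod_cast goalZ
  · refine ⟨5*((fib (b+1))^4 + (fib (b+1))^2) + 1, ?_, by omega⟩
    rw [hb.neg_one_pow] at h
    have goalZ : (fib (5*b+5):ℤ) =
        ((5 * fib (b+1) * (5*((fib (b+1))^4 + (fib (b+1))^2) + 1) : ℕ) : ℤ) := by
      push_cast
      linarith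
    exact_mod_cast goalZ

lemma fib_mod5_period (n : ℕ) : fib (n + 20) % 5 = fib n % 5 := by
  have h : fib (n + 19 + 1) = fib n * fib 19 + fib (n+1) * fib 20 := fib_add n 19
  have h19 : fib 19 = 4181 := rfl
  have h20 : fib 20 = 6765 := rfl
  rw [show n + 20 = n + 19 + 1 from rfl, h, h19, h20]
  omega

lemma five_not_dvd_fib {j : ℕ} (h : ¬ (5 ∣ j)) : ¬ (5 ∣ fib j) := by
  induction j using Nat.strong_induction_on with
  | _ j ih =>
    rcases Nat.lt_or_ge j 20 with hj | hj
    · have hh : ∀ j < 20, ¬ (5 ∣ j) → ¬ (5 ∣ fib j) := by decide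
      exact hh j hj h
    · obtain ⟨i, rfl⟩ : ∃ i, j = i + 20 := ⟨j - 20, by omega⟩
      have := fib_mod5_period i
      have hi := ih i (by omega) (by omega)
      omega

lemma pow5_dvd_of_dvd_fib : ∀ (e j : ℕ), 1 ≤ j → 5^e ∣ fib j → 5^e ∣ j := by
  intro e
  induction e with
  | zero => intro j _ _; simpa using Nat.one_dvd j
  | succ e ih =>
    intro j hj h
    have h5 : (5:ℕ) ∣ fib j := dvd_trans (dvd_pow_self 5 (Nat.succ_ne_zero e)) h
    have h5j : (5:ℕ) ∣ j := by
      by_contra hc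
      exact five_not_dvd_fib hc h5
    obtain ⟨a, rfl⟩ := h5j
    obtain ⟨b, rfl⟩ : ∃ b, a = b + 1 := ⟨a - 1, by omega⟩
    obtain ⟨U, hU, hU5⟩ := fib_five_mul_nat b
    rw [show 5 * (b+1) = 5*b+5 by ring] at h ⊢
    rw [hU] at h
    have hcop : Nat.Coprime (5^e) U :=
      Nat.Coprime.pow_left e (((Nat.prime_five).coprime_iff_not_dvd).mpr (by omega))
    have h' : 5^e ∣ fib (b+1) * U := by
      have h'' : 5 * 5^e ∣ 5 * (fib (b+1) * U) := by
        rw [← mul_assoc]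
        simpa [pow_succ, mul_comm] using h
      exact (mul_dvd_mul_iff_left (by norm_num : (5:ℕ) ≠ 0)).mp h''
    have hv : 5^e ∣ fib (b+1) := (Nat.Coprime.dvd_of_dvd_mul_right hcop) h'
    have := ih (b+1) (by omega) hv
    calc 5^(e+1) = 5 * 5^e := by ring
    _ ∣ 5 * (b+1) := mul_dvd_mul_left 5 this
    _ = 5*b+5 := by ring

lemma lucas_mod5 (n : ℕ) : lucas n % 5 = 2 * 3^n % 5 := by
  induction n using Nat.strong_induction_on with
  | _ n ih =>
    match n with
    | 0 => decide
    | 1 => decide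
    | j+2 =>
      have h1 := ih (j+1) (by omega)
      have h2 := ih j (by omega)
      rw [lucas_add_two]
      rw [show (3:ℕ)^(j+2) = 9 * 3^j by ring, show (3:ℕ)^(j+1) = 3 * 3^j by ring] at *
      omega

lemma pow3_mod5_period (n : ℕ) : 3^n % 5 = 3^(n % 4) % 5 := by
  induction n using Nat.strong_induction_on with
  | _ n ih =>
    rcases Nat.lt_or_ge n 4 with h | h
    · rw [Nat.mod_eq_of_lt h]
    · obtain ⟨i, rfl⟩ : ∃ i, n = i + 4 := ⟨n - 4, by omega⟩
      have hi := ih i (by omega)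
      have h81 : (3:ℕ)^(i+4) = 81 * 3^i := by ring
      have hm : (i + 4) % 4 = i % 4 := by omega
      rw [h81, hm]
      omega

lemma mod4_eq_of_lucas_mod5 {n k : ℕ} (h : lucas n % 5 = lucas k % 5) : n % 4 = k % 4 := by
  have h1 := lucas_mod5 n
  have h2 := lucas_mod5 k
  have h3 := pow3_mod5_period n
  have h4 := pow3_mod5_period k
  have e1 : 3^(n % 4) % 5 = 3^(k % 4) % 5 := by omega
  have b1 : n % 4 < 4 := Nat.mod_lt _ (by omega)
  have b2 : k % 4 < 4 := Nat.mod_lt _ (by omega)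
  interval_cases h5 : n % 4 <;> interval_cases h6 : k % 4 <;> simp_all

lemma lucasZ (x : ℕ) : (lucas x : ℤ) = 2 * fib (x+1) - fib x := by
  have h := lucas_add_fib x
  have h2 : (lucas x : ℤ) + fib x = 2 * fib (x+1) := by exact_mod_cast h
  linarith

lemma lucas_main_id (k e : ℕ) :
    lucas (k + 4*e + 4) = lucas k + 5 * fib (k + 2*e + 2) * fib (2*e + 2) := by
  have hcas := cassini (2*e+1)
  rw [show (2*e+1 : ℕ) + 1 = 2*e+2 from rfl, Odd.neg_one_pow ⟨e, by ring⟩] at hcas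
  have E1 : (fib (4*e+3) : ℤ) = fib (2*e+1) * fib (2*e+1) + fib (2*e+2) * fib (2*e+2) := by
    have := fib_addZ (2*e+1) (2*e+1)
    rw [show (2*e+1) + (2*e+1) + 1 = 4*e+3 by ring, show (2*e+1)+1 = 2*e+2 from rfl] at this
    linarith
  have E2 : (fib (4*e+4) : ℤ) = fib (2*e+1) * fib (2*e+2) + fib (2*e+2) * fib (2*e+3) := by
    have := fib_addZ (2*e+1) (2*e+2)
    rw [show (2*e+1) + (2*e+2) + 1 = 4*e+4 by ring, show (2*e+1)+1 = 2*e+2 from rfl,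
      show (2*e+2)+1 = 2*e+3 from rfl] at this
    linarith
  have E3 : (fib (4*e+5) : ℤ) = fib (2*e+2) * fib (2*e+2) + fib (2*e+3) * fib (2*e+3) := by
    have := fib_addZ (2*e+2) (2*e+2)
    rw [show (2*e+2) + (2*e+2) + 1 = 4*e+5 by ring, show (2*e+2)+1 = 2*e+3 from rfl] at this
    linarith
  have E4 : (fib (k+4*e+4) : ℤ) = fib (4*e+3) * fib k + fib (4*e+4) * fib (k+1) := by
    have := fib_addZ (4*e+3) k
    rw [show (4*e+3) + k + 1 = k+4*e+4 by ring, show (4*e+3)+1 = 4*e+4 from rfl] at this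
    linarith
  have E5 : (fib (k+4*e+5) : ℤ) = fib (4*e+4) * fib k + fib (4*e+5) * fib (k+1) := by
    have := fib_addZ (4*e+4) k
    rw [show (4*e+4) + k + 1 = k+4*e+5 by ring, show (4*e+4)+1 = 4*e+5 from rfl] at this
    linarith
  have E6 : (fib (k+2*e+2) : ℤ) = fib (2*e+1) * fib k + fib (2*e+2) * fib (k+1) := by
    have := fib_addZ (2*e+1) k
    rw [show (2*e+1) + k + 1 = k+2*e+2 by ring, show (2*e+1)+1 = 2*e+2 from rfl] at this
    linarith
  have EW : (fib (2*e+3) : ℤ) = fib (2*e+1) + fib (2*e+2) := by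
    have h : fib (2*e+1+2) = fib (2*e+1) + fib (2*e+2) := fib_add_two
    exact_mod_cast h
  have goalZ : (lucas (k + 4*e + 4) : ℤ) = lucas k + 5 * fib (k + 2*e + 2) * fib (2*e + 2) := by
    rw [lucasZ, lucasZ, show (k+4*e+4)+1 = k+4*e+5 from rfl, E4, E5, E1, E2, E3, E6, EW]
    linear_combination ((fib k : ℤ) - 2 * fib (k+1)) * hcas
  exact_mod_cast goalZ

lemma fib_prod_le (a b : ℕ) : fib (a+1) * fib (b+1) ≤ fib (a + b + 1) := by
  rw [fib_add]; exact Nat.le_add_left _ _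

lemma fib_two_mul_le (j : ℕ) : fib (j+2) ≤ 2 * fib (j+1) := by
  rw [fib_add_two]
  have := fib_le_fib_succ (n := j)
  omega

lemma tenpow_le_fib (d : ℕ) : 10^d ≤ fib (5*d+2) := by
  induction d with
  | zero => simp
  | succ d ih =>
    have h1 : fib (5*d+7) = 3 * fib (5*d+2) + 5 * fib (5*d+3) := by
      have h := fib_add 4 (5*d+2)
      rw [show (4:ℕ) + (5*d+2) + 1 = 5*d+7 by ring] at h
      rw [h]
      norm_num [show (4:ℕ)+1 = 5 from rfl, show fib 4 = 3 from rfl, show fib 5 = 5 from rfl]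
    have h2 : fib (5*d+2) ≤ 2 * fib (5*d+1) := fib_two_mul_le (5*d)
    have h3 : fib (5*d+3) = fib (5*d+1) + fib (5*d+2) := fib_add_two
    have h4 : 10 * fib (5*d+2) ≤ fib (5*d+7) := by omega
    calc 10^(d+1) = 10 * 10^d := by ring
    _ ≤ 10 * fib (5*d+2) := by omega
    _ ≤ fib (5*d+7) := h4
    _ = fib (5*(d+1)+2) := by rw [show 5*(d+1)+2 = 5*d+7 by ring]

lemma aux2 : ∀ e, 2 ≤ e → 5*(e+1)+2 ≤ 2 * 5^e := by
  intro e he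
  induction e with
  | zero => omega
  | succ e ih =>
    rcases Nat.lt_or_ge e 2 with h | h
    · have he1 : e = 1 := by omega
      subst he1; norm_num
    · have h1 := ih (by omega)
      have h2 : (5:ℕ)^(e+1) = 5 * 5^e := by ring
      omega

lemma aux3 : ∀ e, 6 ≤ e → (10*e+24)^2 < 5^e := by
  intro e he
  induction e with
  | zero => omega
  | succ e ih =>
    rcases Nat.lt_or_ge e 6 with h | h
    · have he1 : e = 5 := by omega
      subst he1; norm_num
    · have h1 := ih h
      have h2 : (5:ℕ)^(e+1) = 5 * 5^e := by ring
      nlinarith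

def Lb (x : ℕ) : ℕ := 2 * fib (x+1) - fib x

lemma lucas_eq_Lb (x : ℕ) : lucas x = Lb x := by
  have h := lucas_add_fib x
  have h2 := fib_le_fib_succ (n := x)
  unfold Lb
  omega

def pairOK (n k d : ℕ) : Bool :=
  ((n == 5) && (k == 1)) ||
  !(decide ((Lb n - Lb k) % 10^d = 0)) ||
  ((Lb n - Lb k) / 10^d == 0) ||
  ((List.range 147).all fun m => !(fib m == (Lb n - Lb k) / 10^d))

def boolCheck : Bool :=
  (List.range 149).all fun n =>
    (List.range 32).all fun k =>
      (List.range 8).all fun d =>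
        !(decide (1 ≤ d) && decide (10^(d-1) ≤ Lb k) && decide (Lb k < 10^d)) ||
        pairOK n k d

set_option maxHeartbeats 4000000 in
set_option maxRecDepth 100000 in
lemma boolCheck_true : boolCheck = true := by decide

lemma finite_case {n k m d : ℕ} (hn : n ≤ 148) (hk : k ≤ 31) (hd1 : 1 ≤ d) (hd8 : d ≤ 7)
    (hlow : 10^(d-1) ≤ lucas k) (hhigh : lucas k < 10^d) (hm : 1 ≤ m) (hm2 : m ≤ 146)
    (heq : lucas n = 10^d * fib m + lucas k) : n = 5 ∧ k = 1 := by
  have hb := boolCheck_true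
  simp only [boolCheck, List.all_eq_true, List.mem_range] at hb
  have hpair := hb n (by omega) k (by omega) d (by omega)
  simp only [lucas_eq_Lb] at heq hlow hhigh
  rw [Bool.or_eq_true, Bool.not_eq_true'] at hpair
  rcases hpair with hg | hp
  · exfalso
    rw [Bool.and_eq_false_iff, Bool.and_eq_false_iff] at hg
    simp only [decide_eq_false_iff_not] at hg
    rcases hg with (hg | hg) | hg <;> omega
  · have hq : Lb n - Lb k = 10^d * fib m := by omega
    have hfmpos : 0 < fib m := fib_pos.mpr (by omega)
    have hdvd : (Lb n - Lb k) % 10^d = 0 := by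
      rw [hq]; exact Nat.mul_mod_right _ _
    have hdiv : (Lb n - Lb k) / 10^d = fib m := by
      rw [hq]; exact Nat.mul_div_cancel_left _ (Nat.pow_pos (by norm_num))
    simp only [pairOK, Bool.or_eq_true, Bool.and_eq_true, beq_iff_eq,
      Bool.not_eq_true', decide_eq_false_iff_not, List.all_eq_true, List.mem_range] at hp
    rcases hp with ((hgood | hbad) | hzero) | hall
    · exact hgood
    · exact absurd hdvd hbad
    · rw [hdiv] at hzero; omega
    · have hx := hall m (by omega)
      rw [hdiv] at hx
      simp at hx

lemma fib_factorization_le {j : ℕ} (hj : 1 ≤ j) :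
    (fib j).factorization 5 ≤ j.factorization 5 := by
  have h1 : 5^((fib j).factorization 5) ∣ fib j := Nat.ordProj_dvd _ _
  have h2 : 5^((fib j).factorization 5) ∣ j := pow5_dvd_of_dvd_fib _ _ hj h1
  exact (Nat.Prime.pow_dvd_iff_le_factorization Nat.prime_five (by omega)).mp h2

end LucasConcat

set_option maxHeartbeats 3200000 in
open Nat LucasConcat in
theorem lucas_concat_fib_lucas_base10 (n m k d : ℕ) (hm : 1 ≤ m)
    (hd : d = Nat.log 10 (lucas k) + 1) :
    lucas n = 10 ^ d * Nat.fib m + lucas k ↔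
      (n, m, k, d) ∈ ({(5, 1, 1, 1), (5, 2, 1, 1)} : Set (ℕ × ℕ × ℕ × ℕ)) := by
  constructor
  · intro h
    -- basic facts
    have hLk_pos : 0 < lucas k := lucas_pos k
    have hd1 : 1 ≤ d := by omega
    have hlow : 10^(d-1) ≤ lucas k := by
      rw [hd]
      simpa using Nat.pow_log_le_self 10 (by omega)
    have hhigh : lucas k < 10^d := by
      rw [hd]
      exact Nat.lt_pow_succ_log_self (by norm_num) _
    have hfm : 1 ≤ fib m := fib_pos.mpr (by omega)
    have hten : (10:ℕ)^d = 10 * 10^(d-1) := by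
      obtain ⟨e, rfl⟩ : ∃ e, d = e + 1 := ⟨d - 1, by omega⟩
      simp [pow_succ, mul_comm]
    have h10d : 10 ≤ 10^d := by
      have : 1 ≤ 10^(d-1) := Nat.one_le_pow _ _ (by norm_num)
      omega
    have hLn_ge : 10 + lucas k ≤ lucas n := by
      have : 10^d * 1 ≤ 10^d * fib m := Nat.mul_le_mul_left _ hfm
      omega
    have hn5 : 5 ≤ n := by
      by_contra hc
      have h7 : lucas n ≤ 7 := by
        interval_cases n <;> simp [lucas]
      omega
    have hkn : k < n := by
      by_contra hc
      have := lucas_mono (a := n) (b := k) (by omega) (by omega)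
      omega
    -- mod 5
    have hmul10 : 10^d * fib m = 10 * (10^(d-1) * fib m) := by rw [hten]; ring
    have hmod5 : lucas n % 5 = lucas k % 5 := by omega
    have hmod4 : n % 4 = k % 4 := mod4_eq_of_lucas_mod5 hmod5
    obtain ⟨e, hne⟩ : ∃ e, n = k + 4*e + 4 := by
      refine ⟨(n - k - 4) / 4, by omega⟩
    -- identity
    have hid := lucas_main_id k e
    rw [← hne] at hid
    set t := k + 2*e + 2 with ht_def
    set s := 2*e + 2 with hs_def
    have heq2 : 10^d * fib m = 5 * fib t * fib s := by omega
    have hsplit : (10:ℕ)^d = 5 * (2^d * 5^(d-1)) := by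
      obtain ⟨e', rfl⟩ : ∃ e', d = e' + 1 := ⟨d - 1, by omega⟩
      simp only [Nat.add_sub_cancel]
      rw [show (10:ℕ) = 2*5 from rfl, mul_pow]
      ring
    have hE2 : 2^d * 5^(d-1) * fib m = fib t * fib s := by
      apply Nat.eq_of_mul_eq_mul_left (show 0 < 5 by norm_num)
      rw [show 5 * (2^d * 5^(d-1) * fib m) = (5 * (2^d * 5^(d-1))) * fib m by ring, ← hsplit]
      rw [heq2]; ring
    have hft_pos : 0 < fib t := fib_pos.mpr (by omega)
    have hfs_pos : 0 < fib s := fib_pos.mpr (by omega)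
    have hpow_ge2 : 2 ≤ 2^d * 5^(d-1) := by
      have h1 : 2 ≤ 2^d := by
        calc 2 = 2^1 := rfl
        _ ≤ 2^d := Nat.pow_le_pow_right (by norm_num) hd1
      have h2 : 1 ≤ 5^(d-1) := Nat.one_le_pow _ _ (by norm_num)
      calc 2 = 2*1 := rfl
      _ ≤ 2^d * 5^(d-1) := Nat.mul_le_mul h1 h2
    -- m ≤ t + s - 2
    have hm_le : m + 2 ≤ t + s := by
      by_contra hc
      have h1 : fib (k + 4*e + 3) ≤ fib m := fib_mono (by omega)
      have h2 : fib (k+2*e+1+1) * fib (2*e+1+1) ≤ fib ((k+2*e+1) + (2*e+1) + 1) :=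
        fib_prod_le (k+2*e+1) (2*e+1)
      rw [show (k+2*e+1) + (2*e+1) + 1 = k + 4*e + 3 by ring] at h2
      have h3 : fib t * fib s ≤ fib m := by
        calc fib t * fib s = fib (k+2*e+1+1) * fib (2*e+1+1) := rfl
        _ ≤ fib (k+4*e+3) := h2
        _ ≤ fib m := h1
      have h4 : 2 * fib m ≤ 2^d * 5^(d-1) * fib m := Nat.mul_le_mul_right _ hpow_ge2
      omega
    -- gcd argument
    set g := Nat.gcd t m with hg_def
    have hg_pos : 0 < g := Nat.gcd_pos_of_pos_right _ (by omega)
    have hfg : fib g = Nat.gcd (fib t) (fib m) := fib_gcd t m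
    have hfg_pos : 0 < fib g := fib_pos.mpr hg_pos
    have hdvd_t : fib g ∣ fib t := hfg ▸ Nat.gcd_dvd_left _ _
    have hdvd_m : fib g ∣ fib m := hfg ▸ Nat.gcd_dvd_right _ _
    obtain ⟨u, hu⟩ := hdvd_t
    obtain ⟨w, hw⟩ := hdvd_m
    have hcop : Nat.Coprime u w := by
      have h1 : u = fib t / fib g := by rw [hu]; exact (Nat.mul_div_cancel_left _ hfg_pos).symm
      have h2 : w = fib m / fib g := by rw [hw]; exact (Nat.mul_div_cancel_left _ hfg_pos).symm
      rw [h1, h2, hfg]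
      exact Nat.coprime_div_gcd_div_gcd (hfg ▸ hfg_pos)
    have hkey : u * fib s = 2^d * 5^(d-1) * w := by
      apply Nat.eq_of_mul_eq_mul_left hfg_pos
      calc fib g * (u * fib s) = (fib g * u) * fib s := by ring
      _ = fib t * fib s := by rw [hu]
      _ = 2^d * 5^(d-1) * fib m := hE2.symm
      _ = 2^d * 5^(d-1) * (fib g * w) := by rw [hw]
      _ = fib g * (2^d * 5^(d-1) * w) := by ring
    have hu_dvd : u ∣ 2^d * 5^(d-1) := by
      have : u ∣ 2^d * 5^(d-1) * w := ⟨fib s, by omega⟩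
      exact (Nat.Coprime.dvd_of_dvd_mul_right hcop) this
    have hu_le : u ≤ 2^d * 5^(d-1) := Nat.le_of_dvd (by positivity) hu_dvd
    have hgdvd_t : g ∣ t := Nat.gcd_dvd_left _ _
    have hgdvd_m : g ∣ m := Nat.gcd_dvd_right _ _
    have hg_le_t : g ≤ t := Nat.le_of_dvd (by omega) hgdvd_t
    rcases Nat.eq_or_lt_of_le hg_le_t with hgt | hgt
    · -- case g = t : contradiction
      exfalso
      have htm : t ∣ m := hgt ▸ hgdvd_m
      obtain ⟨q, hq⟩ := htm
      have hst : s ≤ t := by omega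
      have hq1 : q = 1 := by
        have hq0 : q ≠ 0 := by
          rintro rfl
          rw [Nat.mul_zero] at hq
          omega
        rcases Nat.lt_or_ge q 2 with h1 | h1
        · omega
        · exfalso
          have h2 : 2*t ≤ m := by
            calc 2*t = t*2 := by ring
            _ ≤ t*q := Nat.mul_le_mul_left t h1
            _ = m := hq.symm
          omega
      have hmt : m = t := by rw [hq1, Nat.mul_one] at hq; exact hq
      subst hmt
      have hfs_eq : fib s = 2^d * 5^(d-1) :=
        Nat.eq_of_mul_eq_mul_left hft_pos (by linarith [hE2])
      rcases Nat.eq_or_lt_of_le hd1 with hd_eq | hd_ge2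
      · -- d = 1 : fib s = 2, s even
        rw [← hd_eq] at hfs_eq
        norm_num at hfs_eq
        -- s = 2e+2
        rcases Nat.eq_zero_or_pos e with he0 | he1
        · subst he0; simp [hs_def] at hfs_eq
        · have : fib 4 ≤ fib s := fib_mono (by omega)
          have h4 : fib 4 = 3 := rfl
          omega
      · -- d ≥ 2
        have hd2 : 2 ≤ d := hd_ge2
        have hdvd5 : 5^(d-1) ∣ fib s := ⟨2^d, by rw [hfs_eq]; ring⟩
        have hdvd5s : 5^(d-1) ∣ s := pow5_dvd_of_dvd_fib _ _ (by omega) hdvd5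
        have h2s : 2 ∣ s := ⟨e+1, by omega⟩
        have h10s : 2 * 5^(d-1) ∣ s := by
          have hcop25 : Nat.Coprime 2 (5^(d-1)) :=
            Nat.Coprime.pow_right _ (by norm_num)
          exact hcop25.mul_dvd_of_dvd_of_dvd h2s hdvd5s
        have hs_ge : 2 * 5^(d-1) ≤ s := Nat.le_of_dvd (by omega) h10s
        rcases Nat.eq_or_lt_of_le hd2 with hd_eq2 | hd_ge3
        · -- d = 2: fib s = 20, s ≥ 10
          rw [← hd_eq2] at hfs_eq hs_ge
          norm_num at hfs_eq hs_ge
          have : fib 10 ≤ fib s := fib_mono (by omega)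
          have h10 : fib 10 = 55 := rfl
          omega
        · -- d ≥ 3
          have haux := aux2 (d-1) (by omega)
          rw [show (d-1)+1 = d by omega] at haux
          have h1 : fib (5*d+2) ≤ fib s := fib_mono (by omega)
          have h2 : 10^d ≤ fib (5*d+2) := tenpow_le_fib d
          have h3 : (10:ℕ)^d = 5 * (2^d * 5^(d-1)) := by
            obtain ⟨e', rfl⟩ : ∃ e', d = e' + 1 := ⟨d - 1, by omega⟩
            simp only [Nat.add_sub_cancel]
            rw [show (10:ℕ) = 2*5 from rfl, mul_pow]
            ring
          omega
    · -- case g < t : bounds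
      obtain ⟨c2, hc2⟩ := hgdvd_t
      have hc2_ge : 2 ≤ c2 := by
        rcases Nat.lt_or_ge c2 2 with h1 | h1
        · interval_cases c2 <;> omega
        · exact h1
      have ht2g : 2*g ≤ t := by
        have h2 : g*2 ≤ g*c2 := Nat.mul_le_mul_left g hc2_ge
        omega
      obtain ⟨g', hg'⟩ : ∃ g', g = g' + 1 := ⟨g - 1, by omega⟩
      have hprod : fib (g'+1) * fib (t-g'-1+1) ≤ fib (g' + (t-g'-1) + 1) :=
        fib_prod_le g' (t-g'-1)
      rw [show g' + (t-g'-1) + 1 = t by omega] at hprod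
      have hfib_tg : fib g * fib (t-g+1) ≤ fib t := by
        rw [hg']
        rw [show t-(g'+1)+1 = t-g'-1+1 by omega]
        exact hprod
      have hcancel : fib (t-g+1) ≤ 2^d * 5^(d-1) := by
        have h1 : fib g * fib (t-g+1) ≤ fib g * u := by
          rw [← hu]; exact hfib_tg
        have h2 : fib (t-g+1) ≤ u := Nat.le_of_mul_le_mul_left h1 hfg_pos
        omega
      -- 2^d*5^(d-1) ≤ 2 * lucas k
      have hak : 2^d * 5^(d-1) ≤ 2 * lucas k := by
        have h1 : 5 * (2^d * 5^(d-1)) = 10^d := hsplit.symm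
        omega
      have hlk_fib : lucas k ≤ 2 * fib (k+1) := by
        have := lucas_add_fib k
        omega
      have hstep : fib (t-g+1) < fib (k+5) := by
        have h1 : fib (k+5) = 3 * fib k + 5 * fib (k+1) := by
          have h0 := fib_add 4 k
          rw [show (4:ℕ) + k + 1 = k + 5 by ring,
            show fib 4 = 3 from rfl, show (4:ℕ)+1 = 5 from rfl,
            show fib 5 = 5 from rfl] at h0
          exact h0
        have hk1 : 1 ≤ fib (k+1) := fib_pos.mpr (by omega)
        omega
      have htg_lt : t - g + 1 < k + 5 := by
        by_contra hc
        have := fib_mono (show k+5 ≤ t-g+1 by omega)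
        omega
      have ht_le : t ≤ 2*k + 8 := by omega
      -- k ≤ 5d+1
      have hfk_lt : fib k < fib (5*d+2) := by
        have h1 : fib k ≤ lucas k := by
          have := lucas_add_fib k
          have := fib_le_fib_succ (n := k)
          omega
        have h2 := tenpow_le_fib d
        omega
      have hk_le : k ≤ 5*d + 1 := by
        by_contra hc
        have := fib_mono (show 5*d+2 ≤ k by omega)
        omega
      -- 5^(d-1) ≤ t * s
      have hdvd_ts : 5^(d-1) ∣ fib t * fib s := ⟨2^d * fib m, by rw [← hE2]; ring⟩
      have hfact : d - 1 ≤ (fib t).factorization 5 + (fib s).factorization 5 := by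
        have h1 : d - 1 ≤ (fib t * fib s).factorization 5 :=
          (Nat.Prime.pow_dvd_iff_le_factorization Nat.prime_five
            (by positivity)).mp hdvd_ts
        rwa [Nat.factorization_mul (by omega) (by omega), Finsupp.add_apply] at h1
      have hts_fact : d - 1 ≤ t.factorization 5 + s.factorization 5 := by
        have h1 := fib_factorization_le (j := t) (by omega)
        have h2 := fib_factorization_le (j := s) (by omega)
        omega
      have h5dts : 5^(d-1) ≤ t * s := by
        calc 5^(d-1) ≤ 5^(t.factorization 5 + s.factorization 5) :=
          Nat.pow_le_pow_right (by norm_num) hts_fact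
        _ = 5^(t.factorization 5) * 5^(s.factorization 5) := pow_add 5 _ _
        _ ≤ t * s := Nat.mul_le_mul (Nat.ordProj_le 5 (by omega)) (Nat.ordProj_le 5 (by omega))
      -- d ≤ 6
      have hd6 : d ≤ 6 := by
        by_contra hc
        have h1 := aux3 (d-1) (by omega)
        have hs_le_t : s ≤ t := by omega
        have h2 : t * s ≤ (10*(d-1)+24)*(10*(d-1)+24) := by
          have h3 : t ≤ 10*(d-1)+24 := by omega
          have h4 : s ≤ 10*(d-1)+24 := by omega
          exact Nat.mul_le_mul h3 h4
        have h5 : (10*(d-1)+24)^2 = (10*(d-1)+24)*(10*(d-1)+24) := sq _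
        omega
      -- finite region
      have hk31 : k ≤ 31 := by omega
      have hn148 : n ≤ 148 := by omega
      have hm146 : m ≤ 146 := by omega
      obtain ⟨hn5', hk1'⟩ := finite_case hn148 hk31 hd1 (by omega) hlow hhigh hm hm146 h
      subst hn5' ; subst hk1'
      have hd_eq : d = 1 := by
        rw [hd]
        norm_num [show lucas 1 = 1 from rfl]
      subst hd_eq
      have hfm1 : fib m = 1 := by
        have h5 : lucas 5 = 11 := rfl
        have h1 : lucas 1 = 1 := rfl
        rw [h5, h1] at h
        omega
      have hm12 : m = 1 ∨ m = 2 := by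
        rcases Nat.lt_or_ge m 3 with h1 | h1
        · interval_cases m
          · left; rfl
          · right; rfl
        · exfalso
          have := fib_mono (show 3 ≤ m from h1)
          have h3 : fib 3 = 2 := rfl
          omega
      rcases hm12 with rfl | rfl
      · left; rfl
      · right; rfl
  · intro h
    simp only [Set.mem_insert_iff, Set.mem_singleton_iff, Prod.mk.injEq] at h
    rcases h with ⟨h1, h2, h3, h4⟩ | ⟨h1, h2, h3, h4⟩ <;> subst h1 <;> subst h2 <;>
      subst h3 <;> subst h4 <;> decide
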